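/- arXiv:1302.3099 — 2 statements merged into one kernel-verified Lean document; each statement's English description precedes it below -/
import Mathlib

section
/- Let K_v ⊆ L_v ⊆ M_v be a tower of finite extensions of Q_p with M_v/K_v abelian and [M_v : L_v] = p. Let c_{M,v} and c_{L,v} be the conductors of M_v/K_v and L_v/K_v respectively. If c_{L,v} > e_v/(p-1), where e_v is the ramification index of K_v/Q_p, then c_{M,v} ≤ c_{L,v} + e_v. -/
open IsLocalRing

/-- The group `U^c = 1 + 𝔪^c` of principal units of level `c` (with `U^0` the full
unit group), viewed inside the fraction field `K` of the valuation ring `O`. -/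
def principalUnits (O : Type*) [CommRing O] [IsLocalRing O]
    (K : Type*) [Field K] [Algebra O K] (c : ℕ) : Set K :=
  {x : K | ∃ u : O, IsUnit u ∧ u - 1 ∈ maximalIdeal O ^ c ∧ algebraMap O K u = x}

/-- The set of norms of nonzero elements of `L` in `K`. -/
def normGroup (K : Type*) [Field K] (L : Type*) [Field L] [Algebra K L] : Set K :=
  {y : K | ∃ x : L, x ≠ 0 ∧ Algebra.norm K x = y}

/-- The conductor of the extension `L/K`: the least `c` with `U^c ⊆ N_{L/K}(L^×)`. -/
noncomputable def conductor' (O : Type*) [CommRing O] [IsLocalRing O]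
    (K : Type*) [Field K] [Algebra O K]
    (L : Type*) [Field L] [Algebra K L] : ℕ :=
  sInf {c : ℕ | principalUnits O K c ⊆ normGroup K L}

lemma pow_prime_expand {R : Type*} [CommRing R] {p : ℕ} (hp : p.Prime) (t : R) :
    ∃ s : R, (1 + t) ^ p = 1 + p * t + p * t ^ 2 * s + t ^ p := by
  have key : (1 + t) ^ p
      = 1 + p * t + (∑ k ∈ Finset.Ico 2 p, t ^ k * (p.choose k : R)) + t ^ p := by
    have hp2 := hp.two_le
    have h1 : (1 + t) ^ p = ∑ k ∈ Finset.range (p + 1), t ^ k * (p.choose k : R) := by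
      rw [add_comm, add_pow]
      simp
    rw [h1, Finset.sum_range_succ, Nat.choose_self, Nat.cast_one, mul_one,
      Finset.range_eq_Ico, ← Finset.sum_Ico_consecutive _ (Nat.zero_le 2) hp2]
    have h2 : ∑ k ∈ Finset.Ico 0 2, t ^ k * (p.choose k : R) = 1 + p * t := by
      rw [← Finset.range_eq_Ico]
      simp [Finset.sum_range_succ, Nat.choose_one_right, mul_comm]
    rw [h2]
  have hdvd : (p : R) * t ^ 2 ∣ ∑ k ∈ Finset.Ico 2 p, t ^ k * (p.choose k : R) := by
    refine Finset.dvd_sum fun k hk => ?_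
    rw [Finset.mem_Ico] at hk
    rw [mul_comm (t ^ k)]
    exact mul_dvd_mul (Nat.cast_dvd_cast (Nat.Prime.dvd_choose_self hp (by omega) hk.2))
      (pow_dvd_pow t hk.1)
  obtain ⟨s, hs⟩ := hdvd
  exact ⟨s, by rw [key, hs]⟩

lemma exists_div_p {O : Type*} [CommRing O] [IsDomain O] [IsDiscreteValuationRing O]
    {p e : ℕ} (he : (p : O) ∈ maximalIdeal O ^ e) (he' : (p : O) ∉ maximalIdeal O ^ (e + 1))
    {k : ℕ} {x : O} (hx : x ∈ maximalIdeal O ^ (k + e)) :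
    ∃ t ∈ maximalIdeal O ^ k, x = p * t := by
  obtain ⟨π, hπ⟩ := IsDiscreteValuationRing.exists_irreducible O
  have hspan := (IsDiscreteValuationRing.irreducible_iff_uniformizer π).mp hπ
  have hmem : ∀ (n : ℕ) (y : O), y ∈ maximalIdeal O ^ n ↔ π ^ n ∣ y := by
    intro n y
    rw [hspan, Ideal.span_singleton_pow, Ideal.mem_span_singleton]
  obtain ⟨b, hb⟩ := (hmem e _).mp he
  have hbu : IsUnit b := by
    by_contra h
    apply he'
    rw [hmem]
    have hbm : b ∈ maximalIdeal O := (mem_maximalIdeal b).mpr h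
    rw [hspan, Ideal.mem_span_singleton] at hbm
    obtain ⟨c, rfl⟩ := hbm
    exact ⟨c, by rw [hb]; ring⟩
  obtain ⟨a, ha⟩ := (hmem _ _).mp hx
  have hbi : b * ↑hbu.unit⁻¹ = 1 := by
    nth_rewrite 1 [← hbu.unit_spec]
    exact hbu.unit.mul_inv
  refine ⟨↑hbu.unit⁻¹ * (π ^ k * a), (hmem k _).mpr ⟨↑hbu.unit⁻¹ * a, by ring⟩, ?_⟩
  rw [ha, hb, pow_add]
  linear_combination (-(π ^ k * π ^ e * a)) * hbi

lemma newton_step {O : Type*} [CommRing O] [IsDomain O] [IsDiscreteValuationRing O]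
    {p e : ℕ} (hp : p.Prime)
    (he : (p : O) ∈ maximalIdeal O ^ e) (he' : (p : O) ∉ maximalIdeal O ^ (e + 1))
    {k : ℕ} (hk1 : 1 ≤ k) (hke : e + 1 ≤ (p - 1) * k) {u : O} (hu : IsUnit u)
    (hmem : u - 1 ∈ maximalIdeal O ^ (k + e)) :
    ∃ t u', t ∈ maximalIdeal O ^ k ∧ IsUnit u' ∧
      u' - 1 ∈ maximalIdeal O ^ (k + 1 + e) ∧ (1 + t) ^ p * u' = u := by
  obtain ⟨t, ht, hxt⟩ := exists_div_p he he' hmem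
  obtain ⟨s, hs⟩ := pow_prime_expand hp t
  have htm : t ∈ maximalIdeal O := by
    have h := Ideal.pow_le_pow_right hk1 ht
    rwa [pow_one] at h
  have h1t : IsUnit (1 + t) := by
    have h := isUnit_one_sub_self_of_mem_nonunits (-t)
      ((mem_maximalIdeal _).mp (neg_mem htm))
    rwa [sub_neg_eq_add] at h
  have hunit : IsUnit ((1 + t) ^ p) := h1t.pow p
  have hinv : (1 + t) ^ p * ↑hunit.unit⁻¹ = 1 := by
    nth_rewrite 1 [← hunit.unit_spec]
    exact hunit.unit.mul_inv
  refine ⟨t, ↑hunit.unit⁻¹ * u, ht, (Units.isUnit _).mul hu, ?_, ?_⟩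
  · have hexpr : (↑hunit.unit⁻¹ : O) * u - 1
        = -((↑hunit.unit⁻¹ : O) * ((p : O) * t ^ 2 * s + t ^ p)) := by
      linear_combination (↑hunit.unit⁻¹ : O) * hxt - (↑hunit.unit⁻¹ : O) * hs + hinv
    rw [hexpr]
    refine neg_mem (Ideal.mul_mem_left _ _ (add_mem ?_ ?_))
    · have ht2 : t ^ 2 ∈ maximalIdeal O ^ (k + 1) := by
        have h2 : t ^ 2 ∈ maximalIdeal O ^ (k * 2) := by
          have h3 := Ideal.pow_mem_pow ht 2
          rwa [← pow_mul] at h3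
        exact Ideal.pow_le_pow_right (by omega) h2
      have hm : (p : O) * t ^ 2 ∈ maximalIdeal O ^ e * maximalIdeal O ^ (k + 1) :=
        Ideal.mul_mem_mul he ht2
      have hm2 : (p : O) * t ^ 2 ∈ maximalIdeal O ^ (k + 1 + e) := by
        rw [show k + 1 + e = e + (k + 1) by omega, pow_add]
        exact hm
      exact Ideal.mul_mem_right _ _ hm2
    · have hpk : k + 1 + e ≤ p * k := by
        have h : (p - 1) * k + k = p * k := by
          obtain ⟨q, hq⟩ := Nat.exists_eq_add_of_le hp.two_le
          subst hq
          have h4 : 2 + q - 1 = 1 + q := by omega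
          rw [h4]; ring
        omega
      have hp2 : t ^ p ∈ maximalIdeal O ^ (k * p) := by
        have h3 := Ideal.pow_mem_pow ht p
        rwa [← pow_mul] at h3
      exact Ideal.pow_le_pow_right (le_trans hpk (le_of_eq (mul_comm p k))) hp2
  · rw [← mul_assoc, hinv, one_mul]

lemma exists_pow_p_root {O : Type*} [CommRing O] [IsDomain O] [IsDiscreteValuationRing O]
    [IsAdicComplete (maximalIdeal O) O] {p e : ℕ} (hp : p.Prime)
    (he : (p : O) ∈ maximalIdeal O ^ e) (he' : (p : O) ∉ maximalIdeal O ^ (e + 1))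
    {k : ℕ} (hk1 : 1 ≤ k) (hke : e + 1 ≤ (p - 1) * k) {u : O} (hu : IsUnit u)
    (hmem : u - 1 ∈ maximalIdeal O ^ (k + e)) :
    ∃ v : O, IsUnit v ∧ v - 1 ∈ maximalIdeal O ^ k ∧ v ^ p = u := by
  have htop : ∀ n : ℕ, ((maximalIdeal O ^ n • ⊤ : Submodule O O) : Submodule O O)
      = maximalIdeal O ^ n := by
    intro n
    rw [smul_eq_mul, Ideal.mul_top]
  have step : ∀ (n : ℕ) (w : O), ∃ t w', IsUnit w → w - 1 ∈ maximalIdeal O ^ (k + n + e) →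
      t ∈ maximalIdeal O ^ (k + n) ∧ IsUnit w' ∧
        w' - 1 ∈ maximalIdeal O ^ (k + n + 1 + e) ∧ (1 + t) ^ p * w' = w := by
    intro n w
    by_cases h1 : IsUnit w
    · by_cases h2 : w - 1 ∈ maximalIdeal O ^ (k + n + e)
      · obtain ⟨t, w', ht, hw', hmem', heq⟩ := newton_step hp he he'
          (k := k + n) (by omega) (le_trans hke (Nat.mul_le_mul_left _ (by omega))) h1 h2
        exact ⟨t, w', fun _ _ => ⟨ht, hw', hmem', heq⟩⟩
      · exact ⟨0, 0, fun _ h => absurd h h2⟩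
    · exact ⟨0, 0, fun h _ => absurd h h1⟩
  choose T W hTW using step
  set uu : ℕ → O := fun n => Nat.rec u (fun m prev => W m prev) n with huu
  have inv : ∀ n, IsUnit (uu n) ∧ uu n - 1 ∈ maximalIdeal O ^ (k + n + e) := by
    intro n
    induction n with
    | zero => exact ⟨hu, hmem⟩
    | succ n ih =>
      obtain ⟨h1, h2, h3, h4⟩ := hTW n (uu n) ih.1 ih.2
      exact ⟨h2, h3⟩
  set t : ℕ → O := fun n => T n (uu n) with htdef
  have hT : ∀ n, t n ∈ maximalIdeal O ^ (k + n) ∧ (1 + t n) ^ p * uu (n + 1) = uu n :=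
    fun n => ⟨(hTW n (uu n) (inv n).1 (inv n).2).1, (hTW n (uu n) (inv n).1 (inv n).2).2.2.2⟩
  set vv : ℕ → O := fun n => ∏ i ∈ Finset.range n, (1 + t i) with hvv
  have hvu : ∀ n, vv n ^ p * uu n = u := by
    intro n
    induction n with
    | zero =>
      have h0 : uu 0 = u := rfl
      rw [h0]
      simp [hvv]
    | succ n ih =>
      have : vv (n + 1) = vv n * (1 + t n) := Finset.prod_range_succ _ _
      rw [this, mul_pow, mul_assoc, (hT n).2, ih]
  have key : ∀ m j, vv (m + j) - vv m ∈ maximalIdeal O ^ (k + m) := by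
    intro m j
    induction j with
    | zero => simp
    | succ j ih =>
      have hstep : vv (m + (j + 1)) - vv m
          = (vv (m + j) - vv m) + vv (m + j) * t (m + j) := by
        have : vv (m + j + 1) = vv (m + j) * (1 + t (m + j)) := Finset.prod_range_succ _ _
        rw [show m + (j + 1) = m + j + 1 by omega, this]
        ring
      rw [hstep]
      exact add_mem ih (Ideal.mul_mem_left _ _
        (Ideal.pow_le_pow_right (by omega) (hT (m + j)).1))
  have key' : ∀ {m n : ℕ}, m ≤ n → vv n - vv m ∈ maximalIdeal O ^ (k + m) := by
    intro m n h
    obtain ⟨j, rfl⟩ := Nat.le.dest h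
    exact key m j
  have hcauchy : ∀ {m n : ℕ}, m ≤ n →
      vv m ≡ vv n [SMOD (maximalIdeal O ^ m • ⊤ : Submodule O O)] := by
    intro m n h
    rw [SModEq.sub_mem, htop]
    have h2 : vv m - vv n = -(vv n - vv m) := by ring
    rw [h2]
    exact Ideal.pow_le_pow_right (Nat.le_add_left m k) (neg_mem (key' h))
  obtain ⟨V, hV⟩ := IsPrecomplete.prec (inferInstance : IsPrecomplete (maximalIdeal O) O) hcauchy
  have hVn : ∀ n, vv n - V ∈ maximalIdeal O ^ n := by
    intro n
    have := hV n
    rwa [SModEq.sub_mem, htop] at this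
  have hVp : V ^ p = u := by
    have h0 : u - V ^ p = 0 := by
      refine IsHausdorff.haus (inferInstance : IsHausdorff (maximalIdeal O) O) _ fun n => ?_
      rw [SModEq.zero, htop]
      have h1 : u - vv n ^ p ∈ maximalIdeal O ^ n := by
        have heq : u - vv n ^ p = vv n ^ p * (uu n - 1) := by
          rw [← hvu n]; ring
        rw [heq]
        exact Ideal.pow_le_pow_right (by omega)
          (Ideal.mul_mem_left _ _ (inv n).2)
      have h2 : vv n ^ p - V ^ p ∈ maximalIdeal O ^ n := by
        obtain ⟨c, hc⟩ := sub_dvd_pow_sub_pow (vv n) V p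
        rw [hc]
        exact Ideal.mul_mem_right _ _ (hVn n)
      have h3 : u - V ^ p = (u - vv n ^ p) + (vv n ^ p - V ^ p) := by ring
      rw [h3]
      exact add_mem h1 h2
    have := sub_eq_zero.mp h0
    exact this.symm
  have hVk : V - 1 ∈ maximalIdeal O ^ k := by
    have h1 : vv k - V ∈ maximalIdeal O ^ k := hVn k
    have h2 : vv k - vv 0 ∈ maximalIdeal O ^ (k + 0) := key' (Nat.zero_le k)
    have h3 : vv 0 = 1 := by simp [hvv]
    have h4 : V - 1 = (vv k - vv 0) - (vv k - V) + (vv 0 - 1) := by ring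
    rw [h4, h3, sub_self, add_zero]
    exact sub_mem h2 h1
  have hVunit : IsUnit V := by
    have h1 : (1 - V) ∈ maximalIdeal O := by
      have : 1 - V = -(V - 1) := by ring
      have h3 := Ideal.pow_le_pow_right hk1 hVk
      rw [pow_one] at h3
      rw [this]
      exact neg_mem h3
    have h2 := isUnit_one_sub_self_of_mem_nonunits (1 - V) ((mem_maximalIdeal _).mp h1)
    rwa [sub_sub_cancel] at h2
  exact ⟨V, hVunit, hVk, hVp⟩

/-- Let `K ⊆ L ⊆ M` be a tower of finite extensions of `ℚ_p` (where `K` is the fraction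
field of its ring of integers `O`, a complete discrete valuation ring with finite residue
field of characteristic `p`, the ramification index of `K/ℚ_p` being `e`, i.e.
`p ∈ 𝔪^e \ 𝔪^{e+1}`), with `M/K` abelian and `[M:L] = p`. If the conductor `c_L` of
`L/K` satisfies `c_L > e/(p-1)`, then the conductor `c_M` of `M/K` satisfies
`c_M ≤ c_L + e`. -/
theorem stmt_1 (p : ℕ) [Fact p.Prime]
    (O : Type*) [CommRing O] [IsDomain O] [IsDiscreteValuationRing O]
    [IsAdicComplete (maximalIdeal O) O]
    [Finite (ResidueField O)] (hres : CharP (ResidueField O) p)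
    (K : Type*) [Field K] [CharZero K] [Algebra O K] [IsFractionRing O K]
    (L M : Type*) [Field L] [Field M]
    [Algebra K L] [Algebra L M] [Algebra K M] [IsScalarTower K L M]
    [FiniteDimensional K L] [FiniteDimensional K M] [FiniteDimensional L M]
    [IsGalois K M] (habelian : ∀ σ τ : M ≃ₐ[K] M, σ * τ = τ * σ)
    (hdeg : Module.finrank L M = p)
    (e : ℕ) (he₁ : 1 ≤ e)
    (he : (p : O) ∈ maximalIdeal O ^ e) (he' : (p : O) ∉ maximalIdeal O ^ (e + 1))
    (hcL : (conductor' O K L) * (p - 1) > e) :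
    conductor' O K M ≤ conductor' O K L + e := by
  have hp : p.Prime := Fact.out
  set cL := conductor' O K L with hcLdef
  have hSL : {c : ℕ | principalUnits O K c ⊆ normGroup K L}.Nonempty := by
    by_contra h
    rw [Set.not_nonempty_iff_eq_empty] at h
    have h0 : cL = 0 := by rw [hcLdef, conductor', h, Nat.sInf_empty]
    rw [h0, zero_mul] at hcL
    omega
  have hLsub : principalUnits O K cL ⊆ normGroup K L := Nat.sInf_mem hSL
  have hk1 : 1 ≤ cL := by
    rcases Nat.eq_zero_or_pos cL with h | h
    · rw [h, zero_mul] at hcL; omega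
    · exact h
  have hke : e + 1 ≤ (p - 1) * cL := by
    rw [mul_comm] at hcL
    omega
  apply Nat.sInf_le
  intro x hx
  obtain ⟨u, hu, hum, hux⟩ := hx
  obtain ⟨v, hv, hvm, hvp⟩ := exists_pow_p_root hp he he' hk1 hke hu hum
  obtain ⟨z, hz0, hz⟩ := hLsub ⟨v, hv, hvm, rfl⟩
  refine ⟨algebraMap L M z, by simpa using (algebraMap L M).injective.ne hz0, ?_⟩
  calc Algebra.norm K (algebraMap L M z)
      = Algebra.norm K (Algebra.norm L (algebraMap L M z)) := (Algebra.norm_norm (R := K) (S := L) (a := algebraMap L M z)).symm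
    _ = Algebra.norm K (z ^ p) := by rw [Algebra.norm_algebraMap, hdeg]
    _ = (Algebra.norm K z) ^ p := map_pow _ _ _
    _ = (algebraMap O K v) ^ p := by rw [hz]
    _ = algebraMap O K u := by rw [← map_pow, hvp]
    _ = x := hux
end

section
/- Let G be a finite abelian p-group with invariant factors [b_1, ..., b_t, a_1, ..., a_s] (in divisibility order) and H a finite abelian p-group with invariant factors [b_1, ..., b_t, p·a_1, ..., p·a_s], where v_p(a_1) > v_p(b_t) + 1. If G ≅ T × A and H ≅ T × A' where A' has invariant factors equal to p times those of A (and A, A' each have s invariant factors), then the invariant factors of T are [b_1, ..., b_t]. -/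
open Finset Multiset

section Helpers

/-! ### A torsion-counting invariant -/

/-- Number of elements killed by `p ^ k`. -/
private noncomputable def tc (p : ℕ) (X : Type*) [AddCommGroup X] (k : ℕ) : ℕ :=
  Nat.card {x : X // p ^ k • x = 0}

private lemma tc_congr {p : ℕ} {X Y : Type*} [AddCommGroup X] [AddCommGroup Y]
    (e : X ≃+ Y) (k : ℕ) : tc p X k = tc p Y k := by
  refine Nat.card_congr (Equiv.subtypeEquiv e.toEquiv fun x => ?_)
  show _ ↔ p ^ k • e x = 0
  rw [← _root_.map_nsmul e]
  exact (map_eq_zero_iff e e.injective).symm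

private lemma tc_prod (p : ℕ) (X Y : Type*) [AddCommGroup X] [AddCommGroup Y] (k : ℕ) :
    tc p (X × Y) k = tc p X k * tc p Y k := by
  simp only [tc]
  rw [← Nat.card_prod]
  refine Nat.card_congr ((Equiv.subtypeEquivRight fun z => ?_).trans (Equiv.subtypeProdEquivProd))
  simp [Prod.ext_iff]

private lemma tc_pi (p : ℕ) {ι : Type*} [Fintype ι] (M : ι → Type*) [∀ i, AddCommGroup (M i)]
    (k : ℕ) : tc p (∀ i, M i) k = ∏ i, tc p (M i) k := by
  simp only [tc]
  rw [← Nat.card_pi]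
  refine Nat.card_congr ((Equiv.subtypeEquivRight fun f => ?_).trans (Equiv.subtypePiEquivPi))
  simp [funext_iff]

private lemma gcd_pow_pow (p : ℕ) (v k : ℕ) : Nat.gcd (p ^ v) (p ^ k) = p ^ min v k := by
  rcases le_total v k with h | h
  · rw [Nat.gcd_eq_left (pow_dvd_pow p h), min_eq_left h]
  · rw [Nat.gcd_eq_right (pow_dvd_pow p h), min_eq_right h]

private lemma tc_zmod {p : ℕ} (hp : p.Prime) (v k : ℕ) :
    tc p (ZMod (p ^ v)) k = p ^ min k v := by
  haveI : NeZero (p ^ v) := ⟨pow_ne_zero _ hp.pos.ne'⟩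
  rw [tc]
  set c : ZMod (p ^ v) := ((p ^ k : ℕ) : ZMod (p ^ v)) with hc
  set f : ZMod (p ^ v) →+ ZMod (p ^ v) := AddMonoidHom.mulLeft c with hf
  have hker : Nat.card {x : ZMod (p ^ v) // p ^ k • x = 0} = Nat.card f.ker := by
    refine Nat.card_congr (Equiv.subtypeEquivRight fun x => ?_)
    simp [f, AddMonoidHom.mem_ker, nsmul_eq_mul, hc]
  have hrange : f.range = AddSubgroup.zmultiples c := by
    ext x
    constructor
    · rintro ⟨y, rfl⟩
      refine ⟨(y.val : ℤ), ?_⟩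
      have hy : ((y.val : ℕ) : ZMod (p ^ v)) = y := ZMod.natCast_rightInverse y
      simp only [zsmul_eq_mul, Int.cast_natCast, hy]
      show y * c = f y
      simp [f, mul_comm]
    · rintro ⟨m, rfl⟩
      exact ⟨(m : ZMod (p ^ v)), by simp [f, zsmul_eq_mul, mul_comm]⟩
  have hcard := AddSubgroup.card_eq_card_quotient_mul_card_addSubgroup f.ker
  have hquot : Nat.card (ZMod (p ^ v) ⧸ f.ker) = Nat.card f.range :=
    Nat.card_congr (QuotientAddGroup.quotientKerEquivRange f).toEquiv
  have horder : Nat.card f.range = p ^ (v - min v k) := by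
    rw [hrange, Nat.card_zmultiples, hc, ZMod.addOrderOf_coe _ (NeZero.ne _), gcd_pow_pow,
      Nat.pow_div (min_le_left v k) hp.pos]
  rw [hker]
  have hz : Nat.card (ZMod (p ^ v)) = p ^ v := Nat.card_zmod _
  rw [hquot, horder, hz] at hcard
  have key : p ^ (v - min v k) * p ^ min v k = p ^ v := by
    rw [← pow_add]; congr 1; omega
  have := Nat.eq_of_mul_eq_mul_left (pow_pos hp.pos (v - min v k)) (key.trans hcard)
  rw [← this, min_comm]

/-! ### Combinatorics of exponent multisets -/

private def SS (M : Multiset ℕ) (k : ℕ) : ℕ := (M.map (fun e => min k e)).sum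

private lemma SS_zero (M : Multiset ℕ) : SS M 0 = 0 := by
  simp [SS, Nat.zero_min]

private lemma SS_add (M N : Multiset ℕ) (k : ℕ) : SS (M + N) k = SS M k + SS N k := by
  simp [SS]

private lemma SS_succ (M : Multiset ℕ) (k : ℕ) :
    SS M (k + 1) = SS M k + M.countP (fun e => k + 1 ≤ e) := by
  induction M using Multiset.induction with
  | empty => simp [SS]
  | cons a M ih =>
    simp only [SS, Multiset.map_cons, Multiset.sum_cons, Multiset.countP_cons] at *
    split_ifs <;> omega

private lemma SS_shift (M : Multiset ℕ) (k : ℕ) :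
    SS (M.map (· + 1)) (k + 1) = SS M k + Multiset.card M := by
  simp only [SS, Multiset.map_map]
  have h : ∀ e : ℕ, min (k + 1) (e + 1) = min k e + 1 := fun e => by omega
  calc (M.map fun e => min (k + 1) (e + 1)).sum = (M.map fun e => min k e + 1).sum :=
        congrArg _ (Multiset.map_congr rfl fun e _ => h e)
    _ = SS M k + Multiset.card M := by
        rw [show (fun e => min k e + 1) = (fun e => min k e + (fun _ => 1) e) from rfl]
        rw [Multiset.sum_map_add]
        simp [SS]

private lemma count_add_countP (M : Multiset ℕ) (x : ℕ) :
    M.count x + M.countP (fun e => x + 1 ≤ e) = M.countP (fun e => x ≤ e) := by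
  induction M using Multiset.induction with
  | empty => simp
  | cons a M ih =>
    simp only [Multiset.count_cons, Multiset.countP_cons]
    split_ifs <;> omega

private lemma SS_inj (E B : Multiset ℕ) (hE : ∀ x ∈ E, 0 < x) (hB : ∀ x ∈ B, 0 < x)
    (h : ∀ k, SS E k = SS B k) : E = B := by
  have hcnt : ∀ k, E.countP (fun e => k + 1 ≤ e) = B.countP (fun e => k + 1 ≤ e) := by
    intro k
    have h1 := SS_succ E k
    have h2 := SS_succ B k
    have := h k; have := h (k + 1)
    omega
  ext x
  rcases Nat.eq_zero_or_pos x with rfl | hx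
  · rw [Multiset.count_eq_zero.2 (fun hm => (hE 0 hm).false),
      Multiset.count_eq_zero.2 (fun hm => (hB 0 hm).false)]
  · have h1 := count_add_countP E x
    have h2 := count_add_countP B x
    obtain ⟨y, rfl⟩ := Nat.exists_eq_add_of_lt hx
    simp only [Nat.zero_add] at *
    have := hcnt y
    have := hcnt (y + 1)
    omega

/-! ### Sums over lists via `Fin` -/

private lemma list_sum_eq_fin (l : List ℕ) (f : ℕ → ℕ) :
    (l.map f).sum = ∑ i : Fin l.length, f (l.get i) := by
  have h1 : l.map f = List.ofFn (f ∘ l.get) := by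
    conv_lhs => rw [← List.ofFn_get l, List.map_ofFn]
  rw [h1, List.sum_ofFn]
  rfl

private lemma list_prod_eq_fin (l : List ℕ) :
    l.prod = ∏ i : Fin l.length, l.get i := by
  conv_lhs => rw [← List.ofFn_get l]
  rw [List.prod_ofFn]

private lemma prod_pow_list {p : ℕ} : ∀ {l : List ℕ}, (∀ x ∈ l, ∃ j, x = p ^ j) →
    ∃ j, l.prod = p ^ j := by
  intro l
  induction l with
  | nil => exact fun _ => ⟨0, rfl⟩
  | cons x l ih =>
    intro h
    obtain ⟨j1, hj1⟩ := h x List.mem_cons_self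
    obtain ⟨j2, hj2⟩ := ih fun y hy => h y (List.mem_cons_of_mem _ hy)
    exact ⟨j1 + j2, by rw [List.prod_cons, hj1, hj2, pow_add]⟩

/-- `p`-adic valuation -/
private def wv (p x : ℕ) : ℕ := x.factorization p

private lemma wv_pow {p : ℕ} (hp : p.Prime) (j : ℕ) : wv p (p ^ j) = j := by
  simp [wv, hp.factorization_pow]

private lemma tc_of_list {p : ℕ} (hp : p.Prime) {X : Type*} [AddCommGroup X] {l : List ℕ}
    (hl : ∀ x ∈ l, ∃ j, x = p ^ j) (e : X ≃+ ∀ i : Fin l.length, ZMod (l.get i)) (k : ℕ) :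
    tc p X k = p ^ SS ↑(l.map (wv p)) k := by
  rw [tc_congr e, tc_pi]
  have hstep : ∀ i : Fin l.length, tc p (ZMod (l.get i)) k = p ^ min k (wv p (l.get i)) := by
    intro i
    obtain ⟨j, hj⟩ := hl _ (l.get_mem i)
    rw [hj, tc_zmod hp, wv_pow hp]
  rw [Finset.prod_congr rfl (fun i _ => hstep i), Finset.prod_pow_eq_pow_sum]
  congr 1
  have h2 : SS ((l.map (wv p) : List ℕ) : Multiset ℕ) k
      = (l.map (fun x => min k (wv p x))).sum := by
    rw [SS, Multiset.map_coe, Multiset.sum_coe, List.map_map]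
    rfl
  rw [h2, list_sum_eq_fin]

private lemma card_of_equiv {X : Type*} [AddCommGroup X] {l : List ℕ}
    (e : X ≃+ ∀ i : Fin l.length, ZMod (l.get i)) : Nat.card X = l.prod := by
  have h : Nat.card X = ∏ i : Fin l.length, Nat.card (ZMod (l.get i)) := by
    rw [Nat.card_congr e.toEquiv, Nat.card_pi]
  rw [h]
  simp only [Nat.card_zmod]
  exact (list_prod_eq_fin l).symm

private def zmodCongr {x y : ℕ} (h : x = y) : ZMod x ≃+ ZMod y := (ZMod.ringEquivCongr h).toAddEquiv

private def piConsEquiv (x : ℕ) (l : List ℕ) :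
    (∀ i : Fin (l.length + 1), ZMod ((x :: l).get i)) ≃+
      ZMod x × ∀ i : Fin l.length, ZMod (l.get i) where
  toFun f := (f 0, fun i => f i.succ)
  invFun z := fun i => Fin.cases z.1 (fun j => z.2 j) i
  left_inv f := by
    funext i
    refine Fin.cases ?_ ?_ i
    · rfl
    · intro j; simp
  right_inv z := by
    refine Prod.ext ?_ ?_
    · rfl
    · funext j; rfl
  map_add' f g := rfl

private lemma pi_perm_equiv {l1 l2 : List ℕ} (h : l1.Perm l2) :
    Nonempty ((∀ i : Fin l1.length, ZMod (l1.get i)) ≃+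
      ∀ i : Fin l2.length, ZMod (l2.get i)) := by
  induction h with
  | nil => exact ⟨AddEquiv.refl _⟩
  | cons x h ih =>
    obtain ⟨e⟩ := ih
    exact ⟨(piConsEquiv x _).trans (((AddEquiv.refl (ZMod x)).prodCongr e).trans
      (piConsEquiv x _).symm)⟩
  | swap x y l =>
    have mid : (ZMod y × ZMod x × (∀ i : Fin l.length, ZMod (l.get i))) ≃+
        (ZMod x × ZMod y × (∀ i : Fin l.length, ZMod (l.get i))) :=
      (AddEquiv.prodAssoc ..).symm.trans
        ((AddEquiv.prodComm.prodCongr (AddEquiv.refl _)).trans (AddEquiv.prodAssoc ..))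
    exact ⟨(piConsEquiv y (x :: l)).trans
      ((((AddEquiv.refl (ZMod y)).prodCongr (piConsEquiv x l)).trans mid).trans
        ((((AddEquiv.refl (ZMod x)).prodCongr (piConsEquiv y l)).symm).trans
          (piConsEquiv x (y :: l)).symm))⟩
  | trans h1 h2 ih1 ih2 =>
    obtain ⟨e1⟩ := ih1; obtain ⟨e2⟩ := ih2
    exact ⟨e1.trans e2⟩

private lemma pi_ofFn_equiv {m : ℕ} (n : Fin m → ℕ) :
    Nonempty ((∀ i, ZMod (n i)) ≃+
      ∀ i : Fin (List.ofFn n).length, ZMod ((List.ofFn n).get i)) := by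
  refine ⟨((RingEquiv.piCongrLeft' (fun i => ZMod (n i))
    (finCongr (List.length_ofFn : (List.ofFn n).length = m)).symm).toAddEquiv).trans
    (AddEquiv.piCongrRight fun j => zmodCongr ?_)⟩
  simp [List.get_ofFn]
  rfl

end Helpers



/-- `l` is the list of invariant factors (in divisibility order) of the finite abelian
group `G`. -/
def IsInvariantFactors (G : Type*) [AddCommGroup G] (l : List ℕ) : Prop :=
  (∀ a ∈ l, 1 < a) ∧ l.Chain' (· ∣ ·) ∧
    Nonempty (G ≃+ ((i : Fin l.length) → ZMod (l.get i)))

/-- Let `G`, `H` be finite abelian `p`-groups with invariant factors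
`[b_1, ..., b_t, a_1, ..., a_s]` and `[b_1, ..., b_t, p a_1, ..., p a_s]`
respectively, where `v_p(a_1) > v_p(b_t) + 1` (expressed as `p^2 * b_j ∣ a_i`,
all entries being powers of `p`). If `G ≅ T × A` and `H ≅ T × A'`, where `A` has
`s` invariant factors and the invariant factors of `A'` are `p` times those of `A`,
then the invariant factors of `T` are `[b_1, ..., b_t]`. -/
theorem stmt_9 (p : ℕ) (hp : p.Prime)
    (G H T A A' : Type*) [AddCommGroup G] [AddCommGroup H] [AddCommGroup T]
    [AddCommGroup A] [AddCommGroup A']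
    [Finite G] [Finite H] [Finite T] [Finite A] [Finite A']
    (hTp : ∀ x : T, ∃ n : ℕ, p ^ n • x = 0)
    (b a : List ℕ)
    (hbpow : ∀ x ∈ b, ∃ k : ℕ, x = p ^ k) (hapow : ∀ x ∈ a, ∃ k : ℕ, x = p ^ k)
    (hane : a ≠ [])
    (hG : IsInvariantFactors G (b ++ a))
    (hH : IsInvariantFactors H (b ++ a.map (p * ·)))
    (hvp : ∀ y ∈ b, ∀ x ∈ a, p ^ 2 * y ∣ x)
    (hGsplit : Nonempty (G ≃+ T × A)) (hHsplit : Nonempty (H ≃+ T × A'))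
    (la : List ℕ) (hla : la.length = a.length)
    (hA : IsInvariantFactors A la)
    (hA' : IsInvariantFactors A' (la.map (p * ·))) :
    IsInvariantFactors T b := by
  classical
  obtain ⟨hGlt, hGchain, ⟨eG⟩⟩ := hG
  obtain ⟨hHlt, -, ⟨eH⟩⟩ := hH
  obtain ⟨hAlt, -, ⟨eA⟩⟩ := hA
  obtain ⟨-, -, ⟨eA'⟩⟩ := hA'
  obtain ⟨eGs⟩ := hGsplit
  obtain ⟨eHs⟩ := hHsplit
  obtain ⟨ι, hι, nT, hnT, ⟨eT0⟩⟩ := AddCommGroup.equiv_directSum_zmod_of_finite' T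
  haveI := hι
  have eT1 : T ≃+ ∀ i : ι, ZMod (nT i) := eT0.trans (DirectSum.addEquivProd _)
  have hnTpow : ∀ i : ι, ∃ j : ℕ, 0 < j ∧ nT i = p ^ j := by
    intro i
    obtain ⟨m, hm⟩ := hTp (eT1.symm (Pi.single i (1 : ZMod (nT i))))
    have hord : addOrderOf (eT1.symm (Pi.single i (1 : ZMod (nT i)))) = nT i := by
      rw [AddEquiv.addOrderOf_eq]
      have h1 : addOrderOf (Pi.single (M := fun i => ZMod (nT i)) i (1 : ZMod (nT i))) = addOrderOf (1 : ZMod (nT i)) :=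
        addOrderOf_injective (AddMonoidHom.single (fun i => ZMod (nT i)) i)
          (Pi.single_injective (M := fun i => ZMod (nT i)) i) (1 : ZMod (nT i))
      rw [h1, ZMod.addOrderOf_one]
    have hdvd : nT i ∣ p ^ m := hord ▸ addOrderOf_dvd_of_nsmul_eq_zero hm
    obtain ⟨j, -, hje⟩ := (Nat.dvd_prime_pow hp).1 hdvd
    refine ⟨j, ?_, hje⟩
    rcases Nat.eq_zero_or_pos j with rfl | h
    · rw [pow_zero] at hje
      exact absurd (hje ▸ hnT i) (by norm_num)
    · exact h
  set eqF : ι ≃ Fin (Fintype.card ι) := Fintype.equivFin ι with heqF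
  set nF : Fin (Fintype.card ι) → ℕ := fun j => nT (eqF.symm j) with hnF
  set lT : List ℕ := List.ofFn nF with hlT
  obtain ⟨eOf⟩ := pi_ofFn_equiv nF
  have eT : T ≃+ ∀ i : Fin lT.length, ZMod (lT.get i) :=
    (eT1.trans (RingEquiv.piCongrLeft' (fun i => ZMod (nT i)) eqF).toAddEquiv).trans eOf
  have hlTpow : ∀ x ∈ lT, ∃ j, 0 < j ∧ x = p ^ j := by
    intro x hx
    obtain ⟨i, hi⟩ := List.mem_ofFn.1 hx
    obtain ⟨j, hj, hje⟩ := hnTpow (eqF.symm i)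
    exact ⟨j, hj, hi ▸ hje⟩
  have hlTpow' : ∀ x ∈ lT, ∃ j, x = p ^ j := fun x hx => (hlTpow x hx).imp fun j h => h.2
  have hGpow : ∀ x ∈ b ++ a, ∃ j, x = p ^ j := by
    intro x hx
    rcases List.mem_append.1 hx with h | h
    exacts [hbpow x h, hapow x h]
  have hHpow : ∀ x ∈ b ++ a.map (p * ·), ∃ j, x = p ^ j := by
    intro x hx
    rcases List.mem_append.1 hx with h | h
    · exact hbpow x h
    · obtain ⟨y, hy, rfl⟩ := List.mem_map.1 h
      obtain ⟨j, rfl⟩ := hapow y hy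
      exact ⟨j + 1, by ring⟩
  have hcardA : Nat.card A = la.prod := card_of_equiv eA
  have hcardG : Nat.card G = (b ++ a).prod := card_of_equiv eG
  have hdvd : la.prod ∣ (b ++ a).prod := by
    rw [← hcardA, ← hcardG, Nat.card_congr eGs.toEquiv, Nat.card_prod]
    exact dvd_mul_left _ _
  obtain ⟨Wt, hWt⟩ := prod_pow_list hGpow
  have hlapow : ∀ x ∈ la, ∃ j, x = p ^ j := by
    intro x hx
    obtain ⟨j, -, hje⟩ := (Nat.dvd_prime_pow hp).1 ((List.dvd_prod hx).trans (hWt ▸ hdvd))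
    exact ⟨j, hje⟩
  have hla'pow : ∀ x ∈ la.map (p * ·), ∃ j, x = p ^ j := by
    intro x hx
    obtain ⟨y, hy, rfl⟩ := List.mem_map.1 hx
    obtain ⟨j, rfl⟩ := hlapow y hy
    exact ⟨j + 1, by ring⟩
  have hrewa : ((a.map (p * ·)).map (wv p)) = (a.map (wv p)).map (· + 1) := by
    rw [List.map_map, List.map_map]
    refine List.map_congr_left fun x hx => ?_
    obtain ⟨j, rfl⟩ := hapow x hx
    show wv p (p * p ^ j) = wv p (p ^ j) + 1
    rw [← pow_succ', wv_pow hp, wv_pow hp]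
  have hrewla : ((la.map (p * ·)).map (wv p)) = (la.map (wv p)).map (· + 1) := by
    rw [List.map_map, List.map_map]
    refine List.map_congr_left fun x hx => ?_
    obtain ⟨j, rfl⟩ := hlapow x hx
    show wv p (p * p ^ j) = wv p (p ^ j) + 1
    rw [← pow_succ', wv_pow hp, wv_pow hp]
  have E1 : ∀ k, SS ↑(b.map (wv p)) k + SS ↑(a.map (wv p)) k
      = SS ↑(lT.map (wv p)) k + SS ↑(la.map (wv p)) k := by
    intro k
    have h1 := tc_of_list hp hGpow eG k
    have h2 : tc p G k = tc p T k * tc p A k := (tc_congr eGs k).trans (tc_prod p T A k)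
    rw [tc_of_list hp hlTpow' eT k, tc_of_list hp hlapow eA k, ← pow_add, h1] at h2
    have h3 := Nat.pow_right_injective hp.two_le h2
    rw [List.map_append, ← Multiset.coe_add, SS_add] at h3
    exact h3
  have E2 : ∀ k, SS ↑(b.map (wv p)) k + SS (Multiset.map (· + 1) ↑(a.map (wv p))) k
      = SS ↑(lT.map (wv p)) k + SS (Multiset.map (· + 1) ↑(la.map (wv p))) k := by
    intro k
    have h1 := tc_of_list hp hHpow eH k
    have h2 : tc p H k = tc p T k * tc p A' k := (tc_congr eHs k).trans (tc_prod p T A' k)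
    rw [tc_of_list hp hlTpow' eT k, tc_of_list hp hla'pow eA' k, ← pow_add, h1] at h2
    have h3 := Nat.pow_right_injective hp.two_le h2
    rw [List.map_append, ← Multiset.coe_add, SS_add, hrewa, hrewla] at h3
    rw [Multiset.map_coe, Multiset.map_coe]
    exact h3
  have hmain : ∀ k, SS ↑(a.map (wv p)) k = SS ↑(la.map (wv p)) k := by
    intro k
    induction k with
    | zero => rw [SS_zero, SS_zero]
    | succ k ih =>
      have h1 := E1 (k + 1)
      have h2 := E2 (k + 1)
      rw [SS_shift, SS_shift] at h2
      have hcar : Multiset.card (↑(a.map (wv p)) : Multiset ℕ)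
          = Multiset.card (↑(la.map (wv p)) : Multiset ℕ) := by
        simp [Multiset.coe_card, hla]
      omega
  have hTB : ∀ k, SS ↑(lT.map (wv p)) k = SS ↑(b.map (wv p)) k := by
    intro k
    have := E1 k
    have := hmain k
    omega
  have posT : ∀ x ∈ (↑(lT.map (wv p)) : Multiset ℕ), 0 < x := by
    intro x hx
    rw [Multiset.mem_coe] at hx
    obtain ⟨y, hy, rfl⟩ := List.mem_map.1 hx
    obtain ⟨j, hj, rfl⟩ := hlTpow y hy
    rw [wv_pow hp]
    exact hj
  have posB : ∀ x ∈ (↑(b.map (wv p)) : Multiset ℕ), 0 < x := by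
    intro x hx
    rw [Multiset.mem_coe] at hx
    obtain ⟨y, hy, rfl⟩ := List.mem_map.1 hx
    obtain ⟨j, rfl⟩ := hbpow y hy
    have h1 : 1 < p ^ j := hGlt _ (List.mem_append_left _ hy)
    rw [wv_pow hp]
    rcases Nat.eq_zero_or_pos j with rfl | h
    · rw [pow_zero] at h1; omega
    · exact h
  have hEB := SS_inj _ _ posT posB hTB
  have hperm : (lT.map (wv p)).Perm (b.map (wv p)) := Multiset.coe_eq_coe.1 hEB
  have hpermP : lT.Perm b := by
    have h := hperm.map (fun e => p ^ e)
    rw [List.map_map, List.map_map] at h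
    have hl1 : lT.map ((fun e => p ^ e) ∘ wv p) = lT := by
      have hcg : ∀ x ∈ lT, ((fun e => p ^ e) ∘ wv p) x = id x := by
        intro x hx
        obtain ⟨j, rfl⟩ := hlTpow' x hx
        simp [wv_pow hp]
      rw [List.map_congr_left hcg, List.map_id]
    have hl2 : b.map ((fun e => p ^ e) ∘ wv p) = b := by
      have hcg : ∀ x ∈ b, ((fun e => p ^ e) ∘ wv p) x = id x := by
        intro x hx
        obtain ⟨j, rfl⟩ := hbpow x hx
        simp [wv_pow hp]
      rw [List.map_congr_left hcg, List.map_id]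
    rwa [hl1, hl2] at h
  obtain ⟨efin⟩ := pi_perm_equiv hpermP
  exact ⟨fun x hx => hGlt x (List.mem_append_left _ hx),
    (List.isChain_append.1 hGchain).1, ⟨eT.trans efin⟩⟩
end
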